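/- Let L be a set of graphs with no sources and τ a finite sort. For graphs G₁, G₂ whose sorts are contained in τ, G₁ and G₂ are syntactically congruent for L in the full HR graph algebra if and only if they are syntactically congruent for L in the finitely-sorted subalgebra G^τ. -/

import Mathlib

set_option autoImplicit false

namespace GraphCF

noncomputable section

/-! ### Concrete graphs

A concrete graph over an alphabet `Lab` of edge labels (with arities `ar`):
vertices `Fin n`, edges `Fin m`, each edge carrying a label and the sequence of
attached vertices, and an assignment of the source labels in the sort `srt`
(a finite set of natural numbers) to vertices.  Graphs in the paper are
isomorphism classes of concrete graphs; we work with concrete graphs together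
with the isomorphism relation `GIso`. -/
structure CG (Lab : Type) (ar : Lab → ℕ) : Type where
  n : ℕ
  m : ℕ
  edg : Fin m → (a : Lab) × (Fin (ar a) → Fin n)
  srt : Finset ℕ
  src : {s : ℕ // s ∈ srt} → Fin n

variable {Lab : Type} {ar : Lab → ℕ}

instance quotFinite {α : Type} [Finite α] (r : α → α → Prop) : Finite (Quot r) :=
  Finite.of_surjective (Quot.mk r) fun q => Quot.exists_rep q

/-- The graph `0_τ` consisting only of sources, one for each label in `τ`. -/
def czero (τ : Finset ℕ) : CG Lab ar where
  n := τ.card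
  m := 0
  edg e := Fin.elim0 e
  srt := τ
  src s := τ.equivFin ⟨s.1, s.2⟩

/-- The single-edge graph `a_(s₁,…,s_k)`. -/
def cedge (a : Lab) (s : Fin (ar a) → ℕ) : CG Lab ar where
  n := (Finset.image s Finset.univ).card
  m := 1
  edg _ := ⟨a, fun i => (Finset.image s Finset.univ).equivFin
    ⟨s i, Finset.mem_image_of_mem s (Finset.mem_univ i)⟩⟩
  srt := Finset.image s Finset.univ
  src t := (Finset.image s Finset.univ).equivFin ⟨t.1, t.2⟩

/-- Restriction of sources: keep only the source labels in `τ`. -/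
def crestrict (τ : Finset ℕ) (G : CG Lab ar) : CG Lab ar where
  n := G.n
  m := G.m
  edg := G.edg
  srt := G.srt ∩ τ
  src s := G.src ⟨s.1, (Finset.mem_inter.mp s.2).1⟩

/-- Renaming of sources along a permutation `α`; the new sort is `α⁻¹(srt)`. -/
def crename (α : Equiv.Perm ℕ) (G : CG Lab ar) : CG Lab ar where
  n := G.n
  m := G.m
  edg := G.edg
  srt := G.srt.image (α.symm : ℕ → ℕ)
  src s := G.src ⟨α s.1, by
    obtain ⟨y, hy, he⟩ := Finset.mem_image.mp s.2
    rw [← he, Equiv.apply_symm_apply]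
    exact hy⟩

/-- The fusion relation used to define parallel composition: sources of the two
graphs carrying the same label are identified. -/
def fuseRel (G₁ G₂ : CG Lab ar) :
    (Fin G₁.n ⊕ Fin G₂.n) → (Fin G₁.n ⊕ Fin G₂.n) → Prop :=
  fun x y => ∃ (s : ℕ) (h₁ : s ∈ G₁.srt) (h₂ : s ∈ G₂.srt),
    x = Sum.inl (G₁.src ⟨s, h₁⟩) ∧ y = Sum.inr (G₂.src ⟨s, h₂⟩)

/-- Parallel composition `G₁ ∥ G₂`: disjoint union with fusion of equally
labeled sources; the sort is the union of the sorts. -/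
def ccomp (G₁ G₂ : CG Lab ar) : CG Lab ar :=
  let e := Finite.equivFin (Quot (fuseRel G₁ G₂))
  { n := Nat.card (Quot (fuseRel G₁ G₂))
    m := G₁.m + G₂.m
    edg := fun i =>
      match finSumFinEquiv.symm i with
      | Sum.inl e₁ => ⟨(G₁.edg e₁).1, fun j => e (Quot.mk _ (Sum.inl ((G₁.edg e₁).2 j)))⟩
      | Sum.inr e₂ => ⟨(G₂.edg e₂).1, fun j => e (Quot.mk _ (Sum.inr ((G₂.edg e₂).2 j)))⟩
    srt := G₁.srt ∪ G₂.srt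
    src := fun s =>
      if h : s.1 ∈ G₁.srt then e (Quot.mk _ (Sum.inl (G₁.src ⟨s.1, h⟩)))
      else e (Quot.mk _ (Sum.inr (G₂.src ⟨s.1, (Finset.mem_union.mp s.2).resolve_left h⟩))) }

theorem crestrict_srt (τ : Finset ℕ) (G : CG Lab ar) :
    (crestrict τ G).srt = G.srt ∩ τ := rfl

theorem crename_srt (α : Equiv.Perm ℕ) (G : CG Lab ar) :
    (crename α G).srt = G.srt.image (α.symm : ℕ → ℕ) := rfl

theorem ccomp_srt (G₁ G₂ : CG Lab ar) : (ccomp G₁ G₂).srt = G₁.srt ∪ G₂.srt := rfl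

/-- Isomorphism of concrete graphs. -/
def GIso (G₁ G₂ : CG Lab ar) : Prop :=
  G₁.srt = G₂.srt ∧
  ∃ (ev : Fin G₁.n ≃ Fin G₂.n) (ee : Fin G₁.m ≃ Fin G₂.m),
    (∀ e, (G₂.edg (ee e)).1 = (G₁.edg e).1 ∧
      HEq (G₂.edg (ee e)).2 (fun i => ev ((G₁.edg e).2 i))) ∧
    (∀ (s : ℕ) (h₁ : s ∈ G₁.srt) (h₂ : s ∈ G₂.srt),
      ev (G₁.src ⟨s, h₁⟩) = G₂.src ⟨s, h₂⟩)

def IsoClosed (L : Set (CG Lab ar)) : Prop :=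
  ∀ G₁ G₂ : CG Lab ar, GIso G₁ G₂ → G₁ ∈ L → G₂ ∈ L

def isoClosure (L : Set (CG Lab ar)) : Set (CG Lab ar) :=
  {G | ∃ G' ∈ L, GIso G' G}

/-- `α` is a `τ`-permutation: it fixes every label outside `τ`. -/
def IsTauPerm (τ : Finset ℕ) (α : Equiv.Perm ℕ) : Prop := ∀ x, x ∉ τ → α x = x

/-- Finite permutations of the source labels. -/
def IsFinPerm (α : Equiv.Perm ℕ) : Prop := ∃ τ : Finset ℕ, IsTauPerm τ α

theorem crename_srt_subset {τ : Finset ℕ} {α : Equiv.Perm ℕ} (hα : IsTauPerm τ α)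
    {G : CG Lab ar} (h : G.srt ⊆ τ) : (crename α G).srt ⊆ τ := by
  intro x hx
  obtain ⟨y, hy, he⟩ := Finset.mem_image.mp hx
  subst he
  by_contra hc
  have h1 := hα _ hc
  rw [Equiv.apply_symm_apply] at h1
  exact hc (h1 ▸ h hy)

/-! ### Ground HR terms -/

/-- Ground terms over the HR signature. -/
inductive HRT (Lab : Type) (ar : Lab → ℕ) : Type
  | zero (τ : Finset ℕ)
  | edge (a : Lab) (s : Fin (ar a) → ℕ)
  | restrict (τ : Finset ℕ) (t : HRT Lab ar)
  | rename (α : Equiv.Perm ℕ) (hα : IsFinPerm α) (t : HRT Lab ar)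
  | comp (t₁ t₂ : HRT Lab ar)

/-- The value of a ground HR term in the graph algebra. -/
def HRT.val : HRT Lab ar → CG Lab ar
  | .zero τ => czero τ
  | .edge a s => cedge a s
  | .restrict τ t => crestrict τ t.val
  | .rename α _ t => crename α t.val
  | .comp t₁ t₂ => ccomp t₁.val t₂.val

/-- The term uses only source labels from `τ`. -/
def HRT.usesOnly (τ : Finset ℕ) : HRT Lab ar → Prop
  | .zero τ' => τ' ⊆ τ
  | .edge _ s => ∀ i, s i ∈ τ
  | .restrict τ' t => τ' ⊆ τ ∧ t.usesOnly τ
  | .rename α _ t => IsTauPerm τ α ∧ t.usesOnly τ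
  | .comp t₁ t₂ => t₁.usesOnly τ ∧ t₂.usesOnly τ

/-- The set of graphs generated by ground terms over the `τ`-restricted
HR signature (up to isomorphism). -/
def genGraphs (Lab : Type) (ar : Lab → ℕ) (τ : Finset ℕ) : Set (CG Lab ar) :=
  {G | ∃ t : HRT Lab ar, t.usesOnly τ ∧ GIso t.val G}

/-! ### HR grammars -/

/-- HR terms with nonterminal (set) variables from `N`. -/
inductive HRTV (Lab : Type) (ar : Lab → ℕ) (N : Type) : Type
  | var (X : N)
  | zero (τ : Finset ℕ)
  | edge (a : Lab) (s : Fin (ar a) → ℕ)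
  | restrict (τ : Finset ℕ) (t : HRTV Lab ar N)
  | rename (α : Equiv.Perm ℕ) (hα : IsFinPerm α) (t : HRTV Lab ar N)
  | comp (t₁ t₂ : HRTV Lab ar N)

/-- Evaluation of a term with set variables, with regard to an assignment `S`
of sets of graphs to the nonterminals. -/
def HRTV.evalSet {N : Type} (S : N → Set (CG Lab ar)) : HRTV Lab ar N → Set (CG Lab ar)
  | .var X => S X
  | .zero τ => {czero τ}
  | .edge a s => {cedge a s}
  | .restrict τ t => crestrict τ '' t.evalSet S
  | .rename α _ t => crename α '' t.evalSet S
  | .comp t₁ t₂ => {G | ∃ G₁ ∈ t₁.evalSet S, ∃ G₂ ∈ t₂.evalSet S, G = ccomp G₁ G₂}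

def HRTV.usesOnly {N : Type} (τ : Finset ℕ) : HRTV Lab ar N → Prop
  | .var _ => True
  | .zero τ' => τ' ⊆ τ
  | .edge _ s => ∀ i, s i ∈ τ
  | .restrict τ' t => τ' ⊆ τ ∧ t.usesOnly τ
  | .rename α _ t => IsTauPerm τ α ∧ t.usesOnly τ
  | .comp t₁ t₂ => t₁.usesOnly τ ∧ t₂.usesOnly τ

/-- A grammar: a finite list of rules `X → t`. -/
abbrev Grammar (Lab : Type) (ar : Lab → ℕ) (N : Type) : Type := List (N × HRTV Lab ar N)

def IsSolution {N : Type} (Γ : Grammar Lab ar N) (S : N → Set (CG Lab ar)) : Prop :=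
  ∀ r ∈ Γ, HRTV.evalSet S r.2 ⊆ S r.1

/-- The component of the least solution of `Γ` at the nonterminal `X`
(the least solution is the pointwise intersection of all solutions). -/
def langOf {N : Type} (Γ : Grammar Lab ar N) (X : N) : Set (CG Lab ar) :=
  {G | ∀ S : N → Set (CG Lab ar), IsSolution Γ S → G ∈ S X}

/-- `L` is context-free for a grammar over the `τ`-restricted HR signature. -/
def ContextFreeT (Lab : Type) (ar : Lab → ℕ) (τ : Finset ℕ) (L : Set (CG Lab ar)) : Prop :=
  ∃ (N : Type) (_ : Finite N) (Γ : Grammar Lab ar N) (X : N),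
    (∀ r ∈ Γ, HRTV.usesOnly τ r.2) ∧ L = isoClosure (langOf Γ X)

/-- `L` is context-free: a component of the least solution of a grammar of
recursive equations over HR operations. -/
def ContextFree (Lab : Type) (ar : Lab → ℕ) (L : Set (CG Lab ar)) : Prop :=
  ∃ (N : Type) (_ : Finite N) (Γ : Grammar Lab ar N) (X : N),
    L = isoClosure (langOf Γ X)

/-! ### Contexts and the syntactic congruence of the HR algebra -/

/-- First-order HR contexts: terms built from a variable (`hole`), arbitrary
graph parameters (`const`) and the HR operations. -/
inductive HRCtx (Lab : Type) (ar : Lab → ℕ) : Type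
  | hole
  | const (G : CG Lab ar)
  | zero (τ : Finset ℕ)
  | edge (a : Lab) (s : Fin (ar a) → ℕ)
  | restrict (τ : Finset ℕ) (c : HRCtx Lab ar)
  | rename (α : Equiv.Perm ℕ) (hα : IsFinPerm α) (c : HRCtx Lab ar)
  | comp (c₁ c₂ : HRCtx Lab ar)

def HRCtx.apply : HRCtx Lab ar → CG Lab ar → CG Lab ar
  | .hole, G => G
  | .const H, _ => H
  | .zero τ, _ => czero τ
  | .edge a s, _ => cedge a s
  | .restrict τ c, G => crestrict τ (c.apply G)
  | .rename α _ c, G => crename α (c.apply G)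
  | .comp c₁ c₂, G => ccomp (c₁.apply G) (c₂.apply G)

/-- The syntactic congruence of `L` in the HR graph algebra. -/
def SynCongHR (L : Set (CG Lab ar)) (G₁ G₂ : CG Lab ar) : Prop :=
  G₁.srt = G₂.srt ∧ ∀ c : HRCtx Lab ar, (c.apply G₁ ∈ L ↔ c.apply G₂ ∈ L)

/-- The context uses only source labels from `τ` (and parameters of sort `⊆ τ`). -/
def HRCtx.usesOnly (τ : Finset ℕ) : HRCtx Lab ar → Prop
  | .hole => True
  | .const G => G.srt ⊆ τ
  | .zero τ' => τ' ⊆ τ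
  | .edge _ s => ∀ i, s i ∈ τ
  | .restrict τ' c => τ' ⊆ τ ∧ c.usesOnly τ
  | .rename α _ c => IsTauPerm τ α ∧ c.usesOnly τ
  | .comp c₁ c₂ => c₁.usesOnly τ ∧ c₂.usesOnly τ

/-- The syntactic congruence of `L` in the finitely-sorted subalgebra `G^τ`. -/
def SynCongHRT (τ : Finset ℕ) (L : Set (CG Lab ar)) (G₁ G₂ : CG Lab ar) : Prop :=
  G₁.srt = G₂.srt ∧
  ∀ c : HRCtx Lab ar, c.usesOnly τ → (c.apply G₁ ∈ L ↔ c.apply G₂ ∈ L)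

/-! ### Congruence-based recognizability in the HR algebra -/

/-- A congruence of the HR graph algebra (on concrete graphs; it must contain
graph isomorphism, respect sorts and be compatible with all HR operations). -/
structure HRCongruence (Lab : Type) (ar : Lab → ℕ) : Type 1 where
  rel : CG Lab ar → CG Lab ar → Prop
  iseqv : Equivalence rel
  iso_le : ∀ G₁ G₂, GIso G₁ G₂ → rel G₁ G₂
  srt_eq : ∀ G₁ G₂, rel G₁ G₂ → G₁.srt = G₂.srt
  restrict_compat : ∀ (τ : Finset ℕ) G₁ G₂, rel G₁ G₂ →
    rel (crestrict τ G₁) (crestrict τ G₂)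
  rename_compat : ∀ (α : Equiv.Perm ℕ), IsFinPerm α → ∀ G₁ G₂, rel G₁ G₂ →
    rel (crename α G₁) (crename α G₂)
  comp_compat : ∀ G₁ G₂ H₁ H₂, rel G₁ H₁ → rel G₂ H₂ →
    rel (ccomp G₁ G₂) (ccomp H₁ H₂)

/-- Locally finite: finitely many classes of each sort. -/
def HRCongruence.LocFin (C : HRCongruence Lab ar) : Prop :=
  ∀ τ : Finset ℕ,
    Finite (Quot (fun a b : {G : CG Lab ar // G.srt = τ} => C.rel a.1 b.1))

def HRCongruence.Saturates (C : HRCongruence Lab ar) (L : Set (CG Lab ar)) : Prop :=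
  ∀ G₁ G₂, C.rel G₁ G₂ → (G₁ ∈ L ↔ G₂ ∈ L)

/-- `L` is recognizable in the HR graph algebra: saturated by a locally finite
congruence. -/
def RecogHR (L : Set (CG Lab ar)) : Prop :=
  ∃ C : HRCongruence Lab ar, C.Saturates L ∧ C.LocFin

/-- graphs of sort included in `τ` -/
abbrev CGT (Lab : Type) (ar : Lab → ℕ) (τ : Finset ℕ) : Type :=
  {G : CG Lab ar // G.srt ⊆ τ}

def subRestrict {τ : Finset ℕ} (τ' : Finset ℕ) (G : CGT Lab ar τ) : CGT Lab ar τ :=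
  ⟨crestrict τ' G.1, by rw [crestrict_srt]; exact Finset.Subset.trans Finset.inter_subset_left G.2⟩

def subRename {τ : Finset ℕ} (α : Equiv.Perm ℕ) (hα : IsTauPerm τ α)
    (G : CGT Lab ar τ) : CGT Lab ar τ :=
  ⟨crename α G.1, crename_srt_subset hα G.2⟩

def subComp {τ : Finset ℕ} (G₁ G₂ : CGT Lab ar τ) : CGT Lab ar τ :=
  ⟨ccomp G₁.1 G₂.1, by rw [ccomp_srt]; exact Finset.union_subset G₁.2 G₂.2⟩

/-- A congruence of the finitely-sorted subalgebra `G^τ`. -/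
structure HRCongruenceT (Lab : Type) (ar : Lab → ℕ) (τ : Finset ℕ) : Type 1 where
  rel : CGT Lab ar τ → CGT Lab ar τ → Prop
  iseqv : Equivalence rel
  iso_le : ∀ G₁ G₂ : CGT Lab ar τ, GIso G₁.1 G₂.1 → rel G₁ G₂
  srt_eq : ∀ G₁ G₂ : CGT Lab ar τ, rel G₁ G₂ → G₁.1.srt = G₂.1.srt
  restrict_compat : ∀ (τ' : Finset ℕ), τ' ⊆ τ → ∀ G₁ G₂, rel G₁ G₂ →
    rel (subRestrict τ' G₁) (subRestrict τ' G₂)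
  rename_compat : ∀ (α : Equiv.Perm ℕ) (hα : IsTauPerm τ α), ∀ G₁ G₂, rel G₁ G₂ →
    rel (subRename α hα G₁) (subRename α hα G₂)
  comp_compat : ∀ G₁ G₂ H₁ H₂, rel G₁ H₁ → rel G₂ H₂ →
    rel (subComp G₁ G₂) (subComp H₁ H₂)

/-- `L` is recognizable in the finitely-sorted subalgebra `G^τ`: saturated by a
congruence of `G^τ` with finitely many classes. -/
def RecogHRT (τ : Finset ℕ) (L : Set (CG Lab ar)) : Prop :=
  ∃ C : HRCongruenceT Lab ar τ,
    (∀ G₁ G₂ : CGT Lab ar τ, C.rel G₁ G₂ → (G₁.1 ∈ L ↔ G₂.1 ∈ L)) ∧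
    Finite (Quot C.rel)

/-! ### Tree decompositions and tree-width -/

/-- A tree decomposition of a concrete graph `G`. -/
structure TreeDecomp (G : CG Lab ar) : Type 1 where
  ι : Type
  finι : Finite ι
  T : SimpleGraph ι
  isTree : T.IsTree
  root : ι
  bag : ι → Finset (Fin G.n)
  edges_covered : ∀ e : Fin G.m, ∃ x : ι, ∀ i, (G.edg e).2 i ∈ bag x
  vert_connected : ∀ v : Fin G.n, (T.induce {x : ι | v ∈ bag x}).Connected
  root_bag : ∀ s : {s : ℕ // s ∈ G.srt}, G.src s ∈ bag root

/-- `G` has tree-width at most `k`: it has a tree decomposition all of whose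
bags have at most `k+1` elements. -/
def TWle (G : CG Lab ar) (k : ℕ) : Prop :=
  ∃ td : TreeDecomp G, ∀ x, (td.bag x).card ≤ k + 1

/-! ### Trees -/

/-- Terms denoting trees over an alphabet `B1` of unary and `B2` of binary
edge labels: constants for unary labels, the `append` operations for binary
labels, and root-fusing composition. -/
inductive TTerm (B1 B2 : Type) : Type
  | leaf (c : B1)
  | append (b : B2) (t : TTerm B1 B2)
  | comp (t₁ t₂ : TTerm B1 B2)

/-- Arity function for tree edge labels. -/
def tAr {B1 B2 : Type} : B1 ⊕ B2 → ℕ := Sum.elim (fun _ => 1) (fun _ => 2)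

/-- The tree (as a graph with root source `0`) denoted by a tree term. -/
def treeEval {B1 B2 : Type} : TTerm B1 B2 → CG (B1 ⊕ B2) tAr
  | .leaf c => cedge (Sum.inl c) (fun _ => 0)
  | .append b t => crename (Equiv.swap 0 1)
      (crestrict {1} (ccomp (cedge (Sum.inr b) ![1, 0]) (treeEval t)))
  | .comp t₁ t₂ => ccomp (treeEval t₁) (treeEval t₂)

/-- Two tree terms denote the same tree. -/
def SameTree {B1 B2 : Type} (t u : TTerm B1 B2) : Prop :=
  GIso (treeEval t) (treeEval u)

/-- The height of (the tree denoted by) a tree term. -/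
def TTerm.height {B1 B2 : Type} : TTerm B1 B2 → ℕ
  | .leaf _ => 0
  | .append _ t => t.height + 1
  | .comp t₁ t₂ => max t₁.height t₂.height

/-- Iterated composition `x ∥ l₁ ∥ … ∥ l_n`. -/
def compList {B1 B2 : Type} (x : TTerm B1 B2) (l : List (TTerm B1 B2)) : TTerm B1 B2 :=
  l.foldl TTerm.comp x

/-- Equality of tree terms up to commutativity and associativity of `∥`. -/
inductive ACeq {B1 B2 : Type} : TTerm B1 B2 → TTerm B1 B2 → Prop
  | refl (t) : ACeq t t
  | symm {t u} : ACeq t u → ACeq u t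
  | trans {t u v} : ACeq t u → ACeq u v → ACeq t v
  | comm (t u) : ACeq (.comp t u) (.comp u t)
  | assoc (t u v) : ACeq (.comp (.comp t u) v) (.comp t (.comp u v))
  | congr_append (b) {t u} : ACeq t u → ACeq (.append b t) (.append b u)
  | congr_comp {t u t' u'} : ACeq t t' → ACeq u u' → ACeq (.comp t u) (.comp t' u')

/-! ### Parse trees -/

/-- Unary parse-tree edge labels: the HR constants. -/
inductive PUn (Lab : Type) (ar : Lab → ℕ) : Type
  | zero (τ : Finset ℕ)
  | edge (a : Lab) (s : Fin (ar a) → ℕ)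

/-- Binary parse-tree edge labels: restriction and renaming. -/
inductive PBin : Type
  | restrict (τ : Finset ℕ)
  | rename (α : Equiv.Perm ℕ) (hα : IsFinPerm α)

/-- Parse trees (as tree terms over the parse alphabet). -/
abbrev PTerm (Lab : Type) (ar : Lab → ℕ) : Type := TTerm (PUn Lab ar) PBin

/-- The canonical evaluation of a parse tree: interpret the edge labels as HR
operations in the graph algebra. -/
def pval : PTerm Lab ar → CG Lab ar
  | .leaf (.zero τ) => czero τ
  | .leaf (.edge a s) => cedge a s
  | .append (.restrict τ) t => crestrict τ (pval t)
  | .append (.rename α _) t => crename α (pval t)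
  | .comp t₁ t₂ => ccomp (pval t₁) (pval t₂)

/-- The unary parse label uses only sources from `τ`. -/
def PUnOK (τ : Finset ℕ) : PUn Lab ar → Prop
  | .zero τ' => τ' ⊆ τ
  | .edge _ s => ∀ i, s i ∈ τ

/-- The binary parse label uses only sources from `τ`. -/
def PBinOK (τ : Finset ℕ) : PBin → Prop
  | .restrict τ' => τ' ⊆ τ
  | .rename α _ => IsTauPerm τ α

/-- The `τ`-restricted parse alphabet (unary part). -/
abbrev PUnT (Lab : Type) (ar : Lab → ℕ) (τ : Finset ℕ) : Type := {u : PUn Lab ar // PUnOK τ u}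
/-- The `τ`-restricted parse alphabet (binary part). -/
abbrev PBinT (τ : Finset ℕ) : Type := {b : PBin // PBinOK τ b}
/-- Parse trees over the `τ`-restricted parse alphabet. -/
abbrev PTermT (Lab : Type) (ar : Lab → ℕ) (τ : Finset ℕ) : Type :=
  TTerm (PUnT Lab ar τ) (PBinT τ)

/-- Relabeling of tree terms. -/
def TTerm.mapL {B1 B2 B1' B2' : Type} (f : B1 → B1') (g : B2 → B2') :
    TTerm B1 B2 → TTerm B1' B2'
  | .leaf c => .leaf (f c)
  | .append b t => .append (g b) (t.mapL f g)
  | .comp t₁ t₂ => .comp (t₁.mapL f g) (t₂.mapL f g)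

/-- Inclusion of `τ`-restricted parse trees into all parse trees. -/
def ptInj {τ : Finset ℕ} (t : PTermT Lab ar τ) : PTerm Lab ar :=
  t.mapL Subtype.val Subtype.val

/-! ### Recognizability for sets of (parse) trees -/

/-- A congruence of the tree algebra `T(B_parse)` (over the universe of parse
trees): contains `SameTree` and is compatible with all tree operations. -/
structure TCong (B1 B2 : Type) : Type 1 where
  rel : TTerm B1 B2 → TTerm B1 B2 → Prop
  iseqv : Equivalence rel
  same_le : ∀ t u, SameTree t u → rel t u
  append_compat : ∀ (b : B2) t u, rel t u → rel (.append b t) (.append b u)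
  comp_compat : ∀ t₁ t₂ u₁ u₂, rel t₁ u₁ → rel t₂ u₂ →
    rel (.comp t₁ t₂) (.comp u₁ u₂)

/-- `K` is recognizable in the tree algebra. -/
def RecogTree {B1 B2 : Type} (K : Set (TTerm B1 B2)) : Prop :=
  ∃ C : TCong B1 B2, (∀ t u, C.rel t u → (t ∈ K ↔ u ∈ K)) ∧ Finite (Quot C.rel)

/-- A congruence of the algebra of parse trees `P` (the HR signature
interpreted over trees): contains `SameTree` and is compatible with the
HR operations on trees. -/
structure PCong (Lab : Type) (ar : Lab → ℕ) : Type 1 where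
  rel : PTerm Lab ar → PTerm Lab ar → Prop
  iseqv : Equivalence rel
  same_le : ∀ t u, SameTree t u → rel t u
  restrict_compat : ∀ (τ : Finset ℕ) t u, rel t u →
    rel (.append (PBin.restrict τ) t) (.append (PBin.restrict τ) u)
  rename_compat : ∀ (α : Equiv.Perm ℕ) (hα : IsFinPerm α) t u, rel t u →
    rel (.append (PBin.rename α hα) t) (.append (PBin.rename α hα) u)
  comp_compat : ∀ t₁ t₂ u₁ u₂, rel t₁ u₁ → rel t₂ u₂ →
    rel (.comp t₁ t₂) (.comp u₁ u₂)

/-- `K` is recognizable in the algebra of parse trees. -/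
def RecogP (K : Set (PTerm Lab ar)) : Prop :=
  ∃ C : PCong Lab ar, (∀ t u, C.rel t u → (t ∈ K ↔ u ∈ K)) ∧ Finite (Quot C.rel)

/-! ### Auxiliary development for Statement 11 -/

section Aux

variable {Lab : Type} {ar : Lab → ℕ}

/-- Sigma-equation form of graph isomorphism. -/
def GIso' (G₁ G₂ : CG Lab ar) : Prop :=
  G₁.srt = G₂.srt ∧
  ∃ (ev : Fin G₁.n ≃ Fin G₂.n) (ee : Fin G₁.m ≃ Fin G₂.m),
    (∀ e, G₂.edg (ee e) = ⟨(G₁.edg e).1, fun i => ev ((G₁.edg e).2 i)⟩) ∧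
    (∀ (s : ℕ) (h₁ : s ∈ G₁.srt) (h₂ : s ∈ G₂.srt),
      ev (G₁.src ⟨s, h₁⟩) = G₂.src ⟨s, h₂⟩)

theorem giso_iff {G₁ G₂ : CG Lab ar} : GIso G₁ G₂ ↔ GIso' G₁ G₂ := by
  constructor
  · rintro ⟨hs, ev, ee, he, hsrc⟩
    exact ⟨hs, ev, ee, fun e => Sigma.ext_iff.mpr ⟨(he e).1, (he e).2⟩, hsrc⟩
  · rintro ⟨hs, ev, ee, he, hsrc⟩
    exact ⟨hs, ev, ee, fun e => ⟨(Sigma.ext_iff.mp (he e)).1, (Sigma.ext_iff.mp (he e)).2⟩, hsrc⟩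

theorem GIso'.refl (G : CG Lab ar) : GIso' G G :=
  ⟨rfl, Equiv.refl _, Equiv.refl _, fun _ => rfl, fun _ _ _ => rfl⟩

theorem GIso'.symm {G₁ G₂ : CG Lab ar} (h : GIso' G₁ G₂) : GIso' G₂ G₁ := by
  obtain ⟨hs, ev, ee, he, hsrc⟩ := h
  refine ⟨hs.symm, ev.symm, ee.symm, fun e => ?_, fun s h₁ h₂ => ?_⟩
  · have h' := he (ee.symm e)
    rw [Equiv.apply_symm_apply] at h'
    rw [h']
    exact Sigma.ext_iff.mpr ⟨rfl, by simp⟩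
  · have := hsrc s h₂ h₁
    rw [← this, Equiv.symm_apply_apply]

theorem GIso'.trans {G₁ G₂ G₃ : CG Lab ar} (h : GIso' G₁ G₂) (h' : GIso' G₂ G₃) :
    GIso' G₁ G₃ := by
  obtain ⟨hs, ev, ee, he, hsrc⟩ := h
  obtain ⟨hs', ev', ee', he', hsrc'⟩ := h'
  refine ⟨hs.trans hs', ev.trans ev', ee.trans ee', fun e => ?_, fun s h₁ h₃ => ?_⟩
  · show G₃.edg (ee' (ee e)) = _
    rw [he' (ee e), he e]; rfl
  · have h₂ : s ∈ G₂.srt := hs ▸ h₁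
    show ev' (ev _) = _
    rw [hsrc s h₁ h₂, hsrc' s h₂ h₃]

theorem mem_iff_of_giso' {L : Set (CG Lab ar)} (hiso : IsoClosed L) {A B : CG Lab ar}
    (h : GIso' A B) : A ∈ L ↔ B ∈ L :=
  ⟨hiso A B (giso_iff.mpr h), hiso B A (giso_iff.mpr h.symm)⟩

end Aux
section Aux2

variable {Lab : Type} {ar : Lab → ℕ}

/-- Edges of a parallel composition, at the level of the fused quotient. -/
def edgeQ (P Q : CG Lab ar) : (Fin P.m ⊕ Fin Q.m) → (a : Lab) × (Fin (ar a) → Quot (fuseRel P Q))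
  | Sum.inl e => ⟨(P.edg e).1, fun i => Quot.mk _ (Sum.inl ((P.edg e).2 i))⟩
  | Sum.inr e => ⟨(Q.edg e).1, fun i => Quot.mk _ (Sum.inr ((Q.edg e).2 i))⟩

/-- Sources of a parallel composition, at the level of the fused quotient. -/
def srcQ (P Q : CG Lab ar) (s : ℕ) (h : s ∈ P.srt ∪ Q.srt) : Quot (fuseRel P Q) :=
  if hp : s ∈ P.srt then Quot.mk _ (Sum.inl (P.src ⟨s, hp⟩))
  else Quot.mk _ (Sum.inr (Q.src ⟨s, (Finset.mem_union.mp h).resolve_left hp⟩))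

noncomputable def eQ (P Q : CG Lab ar) : Quot (fuseRel P Q) ≃ Fin (ccomp P Q).n :=
  Finite.equivFin _

theorem ccomp_src (P Q : CG Lab ar) (s : ℕ) (h : s ∈ (ccomp P Q).srt) :
    (ccomp P Q).src ⟨s, h⟩ = eQ P Q (srcQ P Q s h) := by
  unfold ccomp eQ srcQ
  by_cases hp : s ∈ P.srt <;> simp [hp]

theorem ccomp_edg (P Q : CG Lab ar) (i : Fin (ccomp P Q).m) :
    (ccomp P Q).edg i = ⟨(edgeQ P Q (finSumFinEquiv.symm i)).1,
      fun j => eQ P Q ((edgeQ P Q (finSumFinEquiv.symm i)).2 j)⟩ := by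
  rcases h : finSumFinEquiv.symm i with e | e <;>
    · unfold ccomp eQ edgeQ
      dsimp only
      rw [h]

/-- Build an equivalence of quotients from mutually inverse liftable maps. -/
def quotEquivOfLifts {α β : Sort*} {r : α → α → Prop} {s : β → β → Prop}
    (f : α → Quot s) (g : β → Quot r)
    (hf : ∀ x y, r x y → f x = f y) (hg : ∀ x y, s x y → g x = g y)
    (hgf : ∀ x, Quot.lift g hg (f x) = Quot.mk r x)
    (hfg : ∀ y, Quot.lift f hf (g y) = Quot.mk s y) : Quot r ≃ Quot s where
  toFun := Quot.lift f hf
  invFun := Quot.lift g hg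
  left_inv := by
    intro q
    induction q using Quot.ind with
    | _ x => exact hgf x
  right_inv := by
    intro q
    induction q using Quot.ind with
    | _ y => exact hfg y

@[simp] theorem quotEquivOfLifts_mk {α β : Sort*} {r : α → α → Prop} {s : β → β → Prop}
    (f : α → Quot s) (g : β → Quot r) (hf) (hg) (hgf) (hfg) (x : α) :
    quotEquivOfLifts f g hf hg hgf hfg (Quot.mk r x) = f x := rfl

/-- Restriction preserves isomorphism. -/
theorem GIso'.restrict {G₁ G₂ : CG Lab ar} (ρ : Finset ℕ) (h : GIso' G₁ G₂) :
    GIso' (crestrict ρ G₁) (crestrict ρ G₂) := by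
  obtain ⟨hs, ev, ee, he, hsrc⟩ := h
  exact ⟨by simp [crestrict, hs], ev, ee, he,
    fun s h₁ h₂ => hsrc s (Finset.mem_inter.mp h₁).1 (Finset.mem_inter.mp h₂).1⟩

/-- Renaming preserves isomorphism. -/
theorem GIso'.rename {G₁ G₂ : CG Lab ar} (α : Equiv.Perm ℕ) (h : GIso' G₁ G₂) :
    GIso' (crename α G₁) (crename α G₂) := by
  obtain ⟨hs, ev, ee, he, hsrc⟩ := h
  refine ⟨by simp [crename, hs], ev, ee, he, fun s h₁ h₂ => ?_⟩
  show ev (G₁.src _) = G₂.src _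
  apply hsrc

theorem giso_rename_rename (β α : Equiv.Perm ℕ) (X : CG Lab ar) :
    GIso' (crename β (crename α X)) (crename (β.trans α) X) := by
  refine ⟨?_, Equiv.refl _, Equiv.refl _, fun e => rfl, fun s h₁ h₂ => rfl⟩
  show ((X.srt.image α.symm).image β.symm) = X.srt.image (β.trans α).symm
  rw [Finset.image_image]
  rfl

theorem giso_rename_refl (X : CG Lab ar) : GIso' (crename (Equiv.refl ℕ) X) X := by
  refine ⟨?_, Equiv.refl _, Equiv.refl _, fun e => rfl, fun s h₁ h₂ => rfl⟩
  show X.srt.image _ = X.srt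
  simp

theorem giso_rename_restrict (π : Equiv.Perm ℕ) (ρ : Finset ℕ) (X : CG Lab ar) :
    GIso' (crename π (crestrict ρ X)) (crestrict (ρ.image π.symm) (crename π X)) := by
  refine ⟨?_, Equiv.refl _, Equiv.refl _, fun e => rfl, fun s h₁ h₂ => rfl⟩
  show (X.srt ∩ ρ).image π.symm = (X.srt.image π.symm) ∩ (ρ.image π.symm)
  exact Finset.image_inter _ _ π.symm.injective

theorem giso_restrict_restrict (ρ ρ' : Finset ℕ) (X : CG Lab ar) :
    GIso' (crestrict ρ (crestrict ρ' X)) (crestrict (ρ' ∩ ρ) X) := by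
  refine ⟨?_, Equiv.refl _, Equiv.refl _, fun e => rfl, fun s h₁ h₂ => rfl⟩
  show X.srt ∩ ρ' ∩ ρ = X.srt ∩ (ρ' ∩ ρ)
  exact Finset.inter_assoc _ _ _

theorem giso_restrict_superset {ρ : Finset ℕ} {X : CG Lab ar} (h : X.srt ⊆ ρ) :
    GIso' (crestrict ρ X) X := by
  refine ⟨?_, Equiv.refl _, Equiv.refl _, fun e => rfl, fun s h₁ h₂ => rfl⟩
  show X.srt ∩ ρ = X.srt
  exact Finset.inter_eq_left.mpr h

theorem giso_rename_of_srt_empty (π : Equiv.Perm ℕ) {X : CG Lab ar} (h : X.srt = ∅) :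
    GIso' (crename π X) X := by
  refine ⟨?_, Equiv.refl _, Equiv.refl _, fun e => rfl, fun s h₁ h₂ => ?_⟩
  · show X.srt.image π.symm = X.srt
    rw [h]; rfl
  · exact absurd (h ▸ h₂) (Finset.notMem_empty s)

/-- The sort of a context application depends only on the sort of the argument. -/
theorem apply_srt_congr {G₁ G₂ : CG Lab ar} (h : G₁.srt = G₂.srt) (c : HRCtx Lab ar) :
    (c.apply G₁).srt = (c.apply G₂).srt := by
  induction c with
  | hole => exact h
  | const H => rfl
  | zero τ' => rfl
  | edge a s => rfl
  | restrict τ' c ih => show _ ∩ _ = _ ∩ _; rw [ih]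
  | rename α hα c ih => show Finset.image _ _ = Finset.image _ _; rw [ih]
  | comp c₁ c₂ ih₁ ih₂ => show _ ∪ _ = _ ∪ _; rw [ih₁, ih₂]

end Aux2
section Aux3

variable {Lab : Type} {ar : Lab → ℕ}

private theorem master_edge {P Q R S : CG Lab ar}
    (q : Quot (fuseRel P Q) ≃ Quot (fuseRel R S))
    (ee₀ : (Fin P.m ⊕ Fin Q.m) ≃ (Fin R.m ⊕ Fin S.m))
    (hedg : ∀ j, edgeQ R S (ee₀ j) = ⟨(edgeQ P Q j).1, fun i => q ((edgeQ P Q j).2 i)⟩)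
    (e : Fin (ccomp P Q).m) :
    (ccomp R S).edg (((finSumFinEquiv.symm.trans (ee₀.trans finSumFinEquiv)) :
        Fin (P.m + Q.m) ≃ Fin (R.m + S.m)) e)
      = ⟨((ccomp P Q).edg e).1,
        fun i => ((eQ P Q).symm.trans (q.trans (eQ R S))) (((ccomp P Q).edg e).2 i)⟩ := by
  have h0 : (finSumFinEquiv.symm (finSumFinEquiv (ee₀ (finSumFinEquiv.symm
      (e : Fin (P.m + Q.m)))))) = ee₀ (finSumFinEquiv.symm (e : Fin (P.m + Q.m))) :=
    Equiv.symm_apply_apply _ _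
  erw [ccomp_edg, ccomp_edg]
  simp only [Equiv.trans_apply]
  erw [h0, hedg]
  simp only [Equiv.trans_apply, Equiv.symm_apply_apply]

private theorem master_src {P Q R S : CG Lab ar}
    (q : Quot (fuseRel P Q) ≃ Quot (fuseRel R S))
    {s : ℕ} (h₁ : s ∈ P.srt ∪ Q.srt) (h₂ : s ∈ R.srt ∪ S.srt)
    (hsrc : q (srcQ P Q s h₁) = srcQ R S s h₂) :
    ((eQ P Q).symm.trans (q.trans (eQ R S))) ((ccomp P Q).src ⟨s, h₁⟩)
      = (ccomp R S).src ⟨s, h₂⟩ := by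
  erw [ccomp_src, ccomp_src]
  simp only [Equiv.trans_apply, Equiv.symm_apply_apply]
  exact congrArg (eQ R S) hsrc

theorem master {P Q R S : CG Lab ar}
    (q : Quot (fuseRel P Q) ≃ Quot (fuseRel R S))
    (ee₀ : (Fin P.m ⊕ Fin Q.m) ≃ (Fin R.m ⊕ Fin S.m))
    (hsrt : P.srt ∪ Q.srt = R.srt ∪ S.srt)
    (hedg : ∀ j, edgeQ R S (ee₀ j) = ⟨(edgeQ P Q j).1, fun i => q ((edgeQ P Q j).2 i)⟩)
    (hsrc : ∀ s (h₁ : s ∈ P.srt ∪ Q.srt) (h₂ : s ∈ R.srt ∪ S.srt),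
      q (srcQ P Q s h₁) = srcQ R S s h₂) :
    GIso' (ccomp P Q) (ccomp R S) :=
  ⟨hsrt, (eQ P Q).symm.trans (q.trans (eQ R S)),
    ((finSumFinEquiv.symm.trans (ee₀.trans finSumFinEquiv)) :
      Fin (P.m + Q.m) ≃ Fin (R.m + S.m)),
    fun e => master_edge q ee₀ hedg e,
    fun s h₁ h₂ => master_src q h₁ h₂ (hsrc s h₁ h₂)⟩

theorem masterR {P Q R S : CG Lab ar} (ρ₁ ρ₂ : Finset ℕ)
    (q : Quot (fuseRel P Q) ≃ Quot (fuseRel R S))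
    (ee₀ : (Fin P.m ⊕ Fin Q.m) ≃ (Fin R.m ⊕ Fin S.m))
    (hsrt : (P.srt ∪ Q.srt) ∩ ρ₁ = (R.srt ∪ S.srt) ∩ ρ₂)
    (hedg : ∀ j, edgeQ R S (ee₀ j) = ⟨(edgeQ P Q j).1, fun i => q ((edgeQ P Q j).2 i)⟩)
    (hsrc : ∀ s (h₁ : s ∈ P.srt ∪ Q.srt) (h₂ : s ∈ R.srt ∪ S.srt), s ∈ ρ₁ →
      q (srcQ P Q s h₁) = srcQ R S s h₂) :
    GIso' (crestrict ρ₁ (ccomp P Q)) (crestrict ρ₂ (ccomp R S)) :=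
  ⟨hsrt, (eQ P Q).symm.trans (q.trans (eQ R S)),
    ((finSumFinEquiv.symm.trans (ee₀.trans finSumFinEquiv)) :
      Fin (P.m + Q.m) ≃ Fin (R.m + S.m)),
    fun e => master_edge q ee₀ hedg e,
    fun s h₁ h₂ => master_src q (Finset.mem_inter.mp h₁).1 (Finset.mem_inter.mp h₂).1
      (hsrc s (Finset.mem_inter.mp h₁).1 (Finset.mem_inter.mp h₂).1
        (Finset.mem_inter.mp h₁).2)⟩

end Aux3
section Aux4

variable {Lab : Type} {ar : Lab → ℕ}

theorem mem_image_symm (π : Equiv.Perm ℕ) (ρ : Finset ℕ) (s : ℕ) :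
    s ∈ ρ.image (π.symm : ℕ → ℕ) ↔ π s ∈ ρ := by
  constructor
  · rintro hx
    obtain ⟨y, hy, he⟩ := Finset.mem_image.mp hx
    rw [← he, Equiv.apply_symm_apply]; exact hy
  · intro h; exact Finset.mem_image.mpr ⟨π s, h, by simp⟩

/-- Parallel composition preserves isomorphism. -/
theorem GIso'.comp {P P' Q Q' : CG Lab ar} (hP : GIso' P P') (hQ : GIso' Q Q') :
    GIso' (ccomp P Q) (ccomp P' Q') := by
  obtain ⟨hsP, evP, eeP, heP, hsrcP⟩ := hP
  obtain ⟨hsQ, evQ, eeQ, heQ, hsrcQ⟩ := hQ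
  have hiff : ∀ x y, fuseRel P Q x y ↔
      fuseRel P' Q' ((Equiv.sumCongr evP evQ) x) ((Equiv.sumCongr evP evQ) y) := by
    intro x y
    constructor
    · rintro ⟨s, h₁, h₂, rfl, rfl⟩
      exact ⟨s, hsP ▸ h₁, hsQ ▸ h₂, by simp [hsrcP s h₁ (hsP ▸ h₁)],
        by simp [hsrcQ s h₂ (hsQ ▸ h₂)]⟩
    · rintro ⟨s, h₁, h₂, hx, hy⟩
      have h₁' : s ∈ P.srt := hsP ▸ h₁
      have h₂' : s ∈ Q.srt := hsQ ▸ h₂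
      refine ⟨s, h₁', h₂', ?_, ?_⟩
      · apply (Equiv.sumCongr evP evQ).injective
        rw [hx]; simp [hsrcP s h₁' h₁]
      · apply (Equiv.sumCongr evP evQ).injective
        rw [hy]; simp [hsrcQ s h₂' h₂]
  refine master (Quot.congr (Equiv.sumCongr evP evQ) hiff) (Equiv.sumCongr eeP eeQ)
    (by rw [hsP, hsQ]) ?_ ?_
  · rintro (e | e)
    · show edgeQ P' Q' (Sum.inl (eeP e)) = _
      simp only [edgeQ]
      rw [heP e]
      rfl
    · show edgeQ P' Q' (Sum.inr (eeQ e)) = _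
      simp only [edgeQ]
      rw [heQ e]
      rfl
  · intro s h₁ h₂
    unfold srcQ
    by_cases hp : s ∈ P.srt
    · rw [dif_pos hp, dif_pos (hsP ▸ hp : s ∈ P'.srt)]
      show Quot.mk _ (Sum.inl (evP _)) = _
      rw [hsrcP s hp (hsP ▸ hp)]
    · have hq : s ∈ Q.srt := (Finset.mem_union.mp h₁).resolve_left hp
      rw [dif_neg hp, dif_neg (fun hc : s ∈ P'.srt => hp (hsP ▸ hc))]
      show Quot.mk _ (Sum.inr (evQ _)) = _
      rw [hsrcQ s hq (hsQ ▸ hq)]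

/-- Renaming distributes over parallel composition. -/
theorem giso_rename_comp (π : Equiv.Perm ℕ) (A B : CG Lab ar) :
    GIso' (crename π (ccomp A B)) (ccomp (crename π A) (crename π B)) := by
  have hiff : ∀ x y, fuseRel A B x y ↔
      fuseRel (crename π A) (crename π B) ((Equiv.refl _) x) ((Equiv.refl _) y) := by
    intro x y
    constructor
    · rintro ⟨s, h₁, h₂, rfl, rfl⟩
      refine ⟨π.symm s, (mem_image_symm π _ _).mpr (by simpa using h₁),
        (mem_image_symm π _ _).mpr (by simpa using h₂), ?_, ?_⟩
      · show _ = Sum.inl (A.src ⟨π (π.symm s), _⟩)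
        exact congrArg Sum.inl (congrArg A.src (Subtype.ext (π.apply_symm_apply s).symm))
      · show _ = Sum.inr (B.src ⟨π (π.symm s), _⟩)
        exact congrArg Sum.inr (congrArg B.src (Subtype.ext (π.apply_symm_apply s).symm))
    · rintro ⟨s, h₁, h₂, hx, hy⟩
      exact ⟨π s, (mem_image_symm π _ _).mp h₁, (mem_image_symm π _ _).mp h₂, hx, hy⟩
  let q : Quot (fuseRel A B) ≃ Quot (fuseRel (crename π A) (crename π B)) :=
    Quot.congr (Equiv.refl _) hiff
  refine ⟨?_, (eQ A B).symm.trans (q.trans (eQ (crename π A) (crename π B))),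
    ((finSumFinEquiv.symm.trans ((Equiv.refl _).trans finSumFinEquiv)) :
      Fin (A.m + B.m) ≃ Fin (A.m + B.m)), ?_, ?_⟩
  · show (A.srt ∪ B.srt).image _ = (A.srt.image _) ∪ (B.srt.image _)
    exact Finset.image_union _ _
  · intro e
    exact master_edge q (Equiv.refl _) (by rintro (e | e) <;> rfl) e
  · intro s h₁ h₂
    have hπ : π s ∈ A.srt ∪ B.srt := by
      rcases Finset.mem_union.mp h₂ with h | h
      · exact Finset.mem_union_left _ ((mem_image_symm π _ _).mp h)
      · exact Finset.mem_union_right _ ((mem_image_symm π _ _).mp h)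
    show ((eQ A B).symm.trans (q.trans (eQ (crename π A) (crename π B))))
      ((ccomp A B).src ⟨π s, hπ⟩) = (ccomp (crename π A) (crename π B)).src ⟨s, h₂⟩
    erw [ccomp_src, ccomp_src]
    simp only [Equiv.trans_apply, Equiv.symm_apply_apply]
    refine congrArg (eQ (crename π A) (crename π B)) ?_
    unfold srcQ
    by_cases hp : π s ∈ A.srt
    · rw [dif_pos hp, dif_pos (show s ∈ (crename π A).srt from (mem_image_symm π A.srt s).mpr hp)]
      rfl
    · have hbn : ¬ s ∈ (crename π A).srt := fun hc => hp ((mem_image_symm π _ _).mp hc)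
      rw [dif_neg hp, dif_neg hbn]
      rfl
end Aux4
section Aux5

variable {Lab : Type} {ar : Lab → ℕ}

/-- Commutativity of parallel composition. -/
theorem giso_comp_comm (A B : CG Lab ar) : GIso' (ccomp A B) (ccomp B A) := by
  have hf : ∀ x y, fuseRel A B x y →
      Quot.mk (fuseRel B A) x.swap = Quot.mk (fuseRel B A) y.swap := by
    rintro _ _ ⟨s, h₁, h₂, rfl, rfl⟩
    exact (Quot.sound ⟨s, h₂, h₁, rfl, rfl⟩).symm
  have hg : ∀ x y, fuseRel B A x y →
      Quot.mk (fuseRel A B) x.swap = Quot.mk (fuseRel A B) y.swap := by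
    rintro _ _ ⟨s, h₁, h₂, rfl, rfl⟩
    exact (Quot.sound ⟨s, h₂, h₁, rfl, rfl⟩).symm
  let q : Quot (fuseRel A B) ≃ Quot (fuseRel B A) :=
    quotEquivOfLifts (fun x => Quot.mk _ x.swap) (fun y => Quot.mk _ y.swap) hf hg
      (fun x => by show Quot.mk _ x.swap.swap = _; rw [Sum.swap_swap])
      (fun y => by show Quot.mk _ y.swap.swap = _; rw [Sum.swap_swap])
  refine master q (Equiv.sumComm _ _) (Finset.union_comm _ _) ?_ ?_
  · rintro (e | e) <;> rfl
  · intro s h₁ h₂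
    unfold srcQ
    by_cases hA : s ∈ A.srt
    · by_cases hB : s ∈ B.srt
      · rw [dif_pos hA, dif_pos hB]
        show Quot.mk _ (Sum.inr (A.src ⟨s, hA⟩)) = _
        exact (Quot.sound ⟨s, hB, hA, rfl, rfl⟩).symm
      · rw [dif_pos hA, dif_neg hB]
        rfl
    · have hB : s ∈ B.srt := (Finset.mem_union.mp h₁).resolve_left hA
      rw [dif_neg hA, dif_pos hB]
      rfl

/-! #### Associativity of parallel composition -/

section Assoc

variable (A B C : CG Lab ar)

private noncomputable def aφ₀ : Fin A.n ⊕ Fin B.n → Quot (fuseRel A (ccomp B C)) :=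
  Sum.elim (fun a => Quot.mk _ (Sum.inl a))
    (fun b => Quot.mk _ (Sum.inr (eQ B C (Quot.mk _ (Sum.inl b)))))

private noncomputable def aψ₀ : Fin B.n ⊕ Fin C.n → Quot (fuseRel (ccomp A B) C) :=
  Sum.elim (fun b => Quot.mk _ (Sum.inl (eQ A B (Quot.mk _ (Sum.inr b)))))
    (fun c => Quot.mk _ (Sum.inr c))

private theorem hABsrcL (s : ℕ) (h : s ∈ (ccomp A B).srt) (hA : s ∈ A.srt) :
    (ccomp A B).src ⟨s, h⟩ = eQ A B (Quot.mk _ (Sum.inl (A.src ⟨s, hA⟩))) := by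
  rw [ccomp_src]
  refine congrArg (eQ A B) ?_
  unfold srcQ; rw [dif_pos hA]

private theorem hABsrcR' (s : ℕ) (h : s ∈ (ccomp A B).srt) (hA : ¬ s ∈ A.srt)
    (hB : s ∈ B.srt) :
    (ccomp A B).src ⟨s, h⟩ = eQ A B (Quot.mk _ (Sum.inr (B.src ⟨s, hB⟩))) := by
  rw [ccomp_src]
  refine congrArg (eQ A B) ?_
  unfold srcQ; rw [dif_neg hA]

private theorem hABsrcR (s : ℕ) (h : s ∈ (ccomp A B).srt) (hB : s ∈ B.srt) :
    (ccomp A B).src ⟨s, h⟩ = eQ A B (Quot.mk _ (Sum.inr (B.src ⟨s, hB⟩))) := by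
  by_cases hA : s ∈ A.srt
  · rw [hABsrcL A B s h hA]
    exact congrArg (eQ A B) (Quot.sound ⟨s, hA, hB, rfl, rfl⟩)
  · exact hABsrcR' A B s h hA hB

private theorem haφ : ∀ x y, fuseRel A B x y → aφ₀ A B C x = aφ₀ A B C y := by
  rintro _ _ ⟨s, hA, hB, rfl, rfl⟩
  show Quot.mk _ (Sum.inl (A.src ⟨s, hA⟩))
    = Quot.mk _ (Sum.inr (eQ B C (Quot.mk _ (Sum.inl (B.src ⟨s, hB⟩)))))
  have h1 : Quot.mk (fuseRel A (ccomp B C)) (Sum.inl (A.src ⟨s, hA⟩))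
      = Quot.mk _ (Sum.inr ((ccomp B C).src ⟨s, Finset.mem_union_left _ hB⟩)) :=
    Quot.sound ⟨s, hA, Finset.mem_union_left _ hB, rfl, rfl⟩
  erw [h1, hABsrcL B C s _ hB]

private theorem haψ : ∀ x y, fuseRel B C x y → aψ₀ A B C x = aψ₀ A B C y := by
  rintro _ _ ⟨s, hB, hC, rfl, rfl⟩
  show Quot.mk _ (Sum.inl (eQ A B (Quot.mk _ (Sum.inr (B.src ⟨s, hB⟩)))))
    = Quot.mk _ (Sum.inr (C.src ⟨s, hC⟩))
  rw [← hABsrcR A B s (Finset.mem_union_right _ hB) hB]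
  exact Quot.sound ⟨s, Finset.mem_union_right _ hB, hC, rfl, rfl⟩

private noncomputable def aφ : Quot (fuseRel A B) → Quot (fuseRel A (ccomp B C)) :=
  Quot.lift (aφ₀ A B C) (haφ A B C)

private noncomputable def aψ : Quot (fuseRel B C) → Quot (fuseRel (ccomp A B) C) :=
  Quot.lift (aψ₀ A B C) (haψ A B C)

private noncomputable def af : Fin (ccomp A B).n ⊕ Fin C.n → Quot (fuseRel A (ccomp B C)) :=
  Sum.elim (fun v => aφ A B C ((eQ A B).symm v))
    (fun c => Quot.mk _ (Sum.inr (eQ B C (Quot.mk _ (Sum.inr c)))))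

private noncomputable def ag : Fin A.n ⊕ Fin (ccomp B C).n → Quot (fuseRel (ccomp A B) C) :=
  Sum.elim (fun a => Quot.mk _ (Sum.inl (eQ A B (Quot.mk _ (Sum.inl a)))))
    (fun v => aψ A B C ((eQ B C).symm v))

private theorem haφcomp (x : Fin A.n ⊕ Fin B.n) :
    aφ A B C ((eQ A B).symm (eQ A B (Quot.mk _ x))) = aφ₀ A B C x := by
  rw [Equiv.symm_apply_apply]; rfl

private theorem haψcomp (x : Fin B.n ⊕ Fin C.n) :
    aψ A B C ((eQ B C).symm (eQ B C (Quot.mk _ x))) = aψ₀ A B C x := by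
  rw [Equiv.symm_apply_apply]; rfl

private theorem haf : ∀ x y, fuseRel (ccomp A B) C x y → af A B C x = af A B C y := by
  rintro _ _ ⟨s, hAB, hC, rfl, rfl⟩
  show aφ A B C ((eQ A B).symm ((ccomp A B).src ⟨s, hAB⟩))
    = Quot.mk _ (Sum.inr (eQ B C (Quot.mk _ (Sum.inr (C.src ⟨s, hC⟩)))))
  by_cases hA : s ∈ A.srt
  · rw [hABsrcL A B s hAB hA, haφcomp]
    show Quot.mk _ (Sum.inl (A.src ⟨s, hA⟩)) = _
    have h1 : Quot.mk (fuseRel A (ccomp B C)) (Sum.inl (A.src ⟨s, hA⟩))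
        = Quot.mk _ (Sum.inr ((ccomp B C).src ⟨s, Finset.mem_union_right _ hC⟩)) :=
      Quot.sound ⟨s, hA, Finset.mem_union_right _ hC, rfl, rfl⟩
    rw [h1]
    refine congrArg (fun z => Quot.mk (fuseRel A (ccomp B C)) (Sum.inr z)) ?_
    erw [ccomp_src]
    refine congrArg (eQ B C) ?_
    unfold srcQ
    by_cases hB : s ∈ B.srt
    · rw [dif_pos hB]
      exact Quot.sound ⟨s, hB, hC, rfl, rfl⟩
    · rw [dif_neg hB]
  · have hB : s ∈ B.srt := (Finset.mem_union.mp hAB).resolve_left hA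
    rw [hABsrcR' A B s hAB hA hB, haφcomp]
    show Quot.mk _ (Sum.inr (eQ B C (Quot.mk _ (Sum.inl (B.src ⟨s, hB⟩))))) = _
    exact congrArg (fun z => Quot.mk (fuseRel A (ccomp B C)) (Sum.inr (eQ B C z)))
      (Quot.sound ⟨s, hB, hC, rfl, rfl⟩)

private theorem hag : ∀ x y, fuseRel A (ccomp B C) x y → ag A B C x = ag A B C y := by
  rintro _ _ ⟨s, hA, hBC, rfl, rfl⟩
  show Quot.mk _ (Sum.inl (eQ A B (Quot.mk _ (Sum.inl (A.src ⟨s, hA⟩)))))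
    = aψ A B C ((eQ B C).symm ((ccomp B C).src ⟨s, hBC⟩))
  by_cases hB : s ∈ B.srt
  · rw [hABsrcL B C s hBC hB, haψcomp]
    show _ = Quot.mk _ (Sum.inl (eQ A B (Quot.mk _ (Sum.inr (B.src ⟨s, hB⟩)))))
    exact congrArg (fun z => Quot.mk (fuseRel (ccomp A B) C) (Sum.inl (eQ A B z)))
      (Quot.sound ⟨s, hA, hB, rfl, rfl⟩)
  · have hC : s ∈ C.srt := (Finset.mem_union.mp hBC).resolve_left hB
    rw [hABsrcR' B C s hBC hB hC, haψcomp]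
    show _ = Quot.mk _ (Sum.inr (C.src ⟨s, hC⟩))
    rw [← hABsrcL A B s (Finset.mem_union_left _ hA) hA]
    exact Quot.sound ⟨s, Finset.mem_union_left _ hA, hC, rfl, rfl⟩

private theorem hkeyg (p : Quot (fuseRel A B)) :
    Quot.lift (ag A B C) (hag A B C) (aφ A B C p)
      = Quot.mk _ (Sum.inl (eQ A B p)) := by
  induction p using Quot.ind with
  | _ x =>
    rcases x with a | b
    · rfl
    · show Quot.lift (ag A B C) (hag A B C)
        (Quot.mk _ (Sum.inr (eQ B C (Quot.mk _ (Sum.inl b))))) = _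
      show aψ A B C ((eQ B C).symm (eQ B C (Quot.mk _ (Sum.inl b)))) = _
      rw [haψcomp]
      rfl

private theorem hkeyf (p : Quot (fuseRel B C)) :
    Quot.lift (af A B C) (haf A B C) (aψ A B C p)
      = Quot.mk _ (Sum.inr (eQ B C p)) := by
  induction p using Quot.ind with
  | _ x =>
    rcases x with b | c
    · show Quot.lift (af A B C) (haf A B C)
        (Quot.mk _ (Sum.inl (eQ A B (Quot.mk _ (Sum.inr b))))) = _
      show aφ A B C ((eQ A B).symm (eQ A B (Quot.mk _ (Sum.inr b)))) = _
      rw [haφcomp]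
      rfl
    · rfl

private theorem hagf : ∀ x, Quot.lift (ag A B C) (hag A B C) (af A B C x)
    = Quot.mk (fuseRel (ccomp A B) C) x := by
  rintro (v | c)
  · show Quot.lift (ag A B C) (hag A B C) (aφ A B C ((eQ A B).symm v)) = _
    rw [hkeyg, Equiv.apply_symm_apply]
  · show aψ A B C ((eQ B C).symm (eQ B C (Quot.mk _ (Sum.inr c)))) = _
    rw [haψcomp]
    rfl

private theorem hafg : ∀ y, Quot.lift (af A B C) (haf A B C) (ag A B C y)
    = Quot.mk (fuseRel A (ccomp B C)) y := by
  rintro (a | v)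
  · show aφ A B C ((eQ A B).symm (eQ A B (Quot.mk _ (Sum.inl a)))) = _
    rw [haφcomp]
    rfl
  · show Quot.lift (af A B C) (haf A B C) (aψ A B C ((eQ B C).symm v)) = _
    rw [hkeyf, Equiv.apply_symm_apply]

private noncomputable def aq : Quot (fuseRel (ccomp A B) C) ≃ Quot (fuseRel A (ccomp B C)) :=
  quotEquivOfLifts (af A B C) (ag A B C) (haf A B C) (hag A B C) (hagf A B C) (hafg A B C)

private theorem haq_inl (x : Fin A.n ⊕ Fin B.n) :
    aq A B C (Quot.mk _ (Sum.inl (eQ A B (Quot.mk _ x)))) = aφ₀ A B C x := by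
  show aφ A B C ((eQ A B).symm (eQ A B (Quot.mk _ x))) = _
  exact haφcomp A B C x

private noncomputable def aee : (Fin (ccomp A B).m ⊕ Fin C.m) ≃ (Fin A.m ⊕ Fin (ccomp B C).m) :=
  ((Equiv.sumCongr (finSumFinEquiv.symm) (Equiv.refl (Fin C.m))).trans
    ((Equiv.sumAssoc (Fin A.m) (Fin B.m) (Fin C.m)).trans
      (Equiv.sumCongr (Equiv.refl (Fin A.m)) finSumFinEquiv)))

/-- Associativity of parallel composition. -/
theorem giso_comp_assoc :
    GIso' (ccomp (ccomp A B) C) (ccomp A (ccomp B C)) := by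
  refine master (aq A B C) (aee A B C) (Finset.union_assoc _ _ _) ?_ ?_
  · rintro (eab | ec)
    · rcases h : finSumFinEquiv.symm eab with ea | eb
      · have h1 : (Equiv.sumCongr (finSumFinEquiv.symm) (Equiv.refl (Fin C.m)))
            (Sum.inl eab) = Sum.inl (Sum.inl ea) := by
          erw [Equiv.sumCongr_apply, Sum.map_inl, h]
        have hee : aee A B C (Sum.inl eab) = Sum.inl ea := by
          show (Equiv.sumCongr (Equiv.refl (Fin A.m)) finSumFinEquiv)
            ((Equiv.sumAssoc (Fin A.m) (Fin B.m) (Fin C.m))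
              ((Equiv.sumCongr (finSumFinEquiv.symm) (Equiv.refl (Fin C.m))) (Sum.inl eab))) = _
          rw [h1]
          rfl
        have hAB_edg := ccomp_edg A B eab
        rw [h] at hAB_edg
        rw [hee]
        show edgeQ A (ccomp B C) (Sum.inl ea)
          = ⟨((ccomp A B).edg eab).1,
              fun i => aq A B C (Quot.mk _ (Sum.inl (((ccomp A B).edg eab).2 i)))⟩
        rw [hAB_edg]
        simp only [edgeQ]
        refine congrArg (Sigma.mk _) ?_
        funext i
        exact (haq_inl A B C (Sum.inl ((A.edg ea).2 i))).symm
      · have h1 : (Equiv.sumCongr (finSumFinEquiv.symm) (Equiv.refl (Fin C.m)))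
            (Sum.inl eab) = Sum.inl (Sum.inr eb) := by
          erw [Equiv.sumCongr_apply, Sum.map_inl, h]
        have hee : aee A B C (Sum.inl eab) = Sum.inr (finSumFinEquiv (Sum.inl eb)) := by
          show (Equiv.sumCongr (Equiv.refl (Fin A.m)) finSumFinEquiv)
            ((Equiv.sumAssoc (Fin A.m) (Fin B.m) (Fin C.m))
              ((Equiv.sumCongr (finSumFinEquiv.symm) (Equiv.refl (Fin C.m))) (Sum.inl eab))) = _
          rw [h1]
          rfl
        have hAB_edg := ccomp_edg A B eab
        rw [h] at hAB_edg
        have hBC_edg := ccomp_edg B C (finSumFinEquiv (Sum.inl eb))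
        rw [Equiv.symm_apply_apply] at hBC_edg
        rw [hee]
        show edgeQ A (ccomp B C) (Sum.inr (finSumFinEquiv (Sum.inl eb)))
          = ⟨((ccomp A B).edg eab).1,
              fun i => aq A B C (Quot.mk _ (Sum.inl (((ccomp A B).edg eab).2 i)))⟩
        rw [hAB_edg]
        simp only [edgeQ]
        rw [hBC_edg]
        simp only [edgeQ]
        refine congrArg (Sigma.mk _) ?_
        funext i
        exact (haq_inl A B C (Sum.inr ((B.edg eb).2 i))).symm
    · have hee : aee A B C (Sum.inr ec) = Sum.inr (finSumFinEquiv (Sum.inr ec)) := rfl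
      have hBC_edg := ccomp_edg B C (finSumFinEquiv (Sum.inr ec))
      rw [Equiv.symm_apply_apply] at hBC_edg
      rw [hee]
      show edgeQ A (ccomp B C) (Sum.inr (finSumFinEquiv (Sum.inr ec)))
        = ⟨(edgeQ (ccomp A B) C (Sum.inr ec)).1,
            fun i => aq A B C ((edgeQ (ccomp A B) C (Sum.inr ec)).2 i)⟩
      simp only [edgeQ]
      rw [hBC_edg]
      simp only [edgeQ]
      rfl
  · intro s h₁ h₂
    by_cases hA : s ∈ A.srt
    · have hmem : s ∈ (ccomp A B).srt := Finset.mem_union_left _ hA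
      show aq A B C (srcQ (ccomp A B) C s h₁) = srcQ A (ccomp B C) s h₂
      unfold srcQ
      rw [dif_pos hmem, dif_pos hA, hABsrcL A B s hmem hA, haq_inl]
      rfl
    · by_cases hB : s ∈ B.srt
      · have hmem : s ∈ (ccomp A B).srt := Finset.mem_union_right _ hB
        have hmem' : s ∈ (ccomp B C).srt := Finset.mem_union_left _ hB
        show aq A B C (srcQ (ccomp A B) C s h₁) = srcQ A (ccomp B C) s h₂
        unfold srcQ
        rw [dif_pos hmem, dif_neg hA, hABsrcR' A B s hmem hA hB, haq_inl]
        show Quot.mk _ (Sum.inr (eQ B C (Quot.mk _ (Sum.inl (B.src ⟨s, hB⟩))))) = _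
        rw [← hABsrcL B C s hmem' hB]
      · have hmem : ¬ s ∈ (ccomp A B).srt := by
          intro hc
          rcases Finset.mem_union.mp hc with h | h
          exacts [hA h, hB h]
        have hC : s ∈ C.srt := (Finset.mem_union.mp h₁).resolve_left hmem
        have hmem' : s ∈ (ccomp B C).srt := Finset.mem_union_right _ hC
        show aq A B C (srcQ (ccomp A B) C s h₁) = srcQ A (ccomp B C) s h₂
        unfold srcQ
        rw [dif_neg hmem, dif_neg hA]
        show Quot.mk _ (Sum.inr (eQ B C (Quot.mk _ (Sum.inr (C.src ⟨s, _⟩))))) = _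
        rw [← hABsrcR B C s hmem' hC]

end Assoc

end Aux5
section Aux6

variable {Lab : Type} {ar : Lab → ℕ}

/-- Trimming the parameter of a composition to `τ` under a restriction that
kills all sources. -/
theorem giso_trim {G H : CG Lab ar} (τ ρ : Finset ℕ) (hσ : G.srt ⊆ τ)
    (hE : (G.srt ∪ H.srt) ∩ ρ = ∅) :
    GIso' (crestrict ρ (ccomp G H)) (crestrict (ρ ∩ τ) (ccomp G (crestrict τ H))) := by
  have hiff : ∀ x y, fuseRel G H x y ↔
      fuseRel G (crestrict τ H) ((Equiv.refl _) x) ((Equiv.refl _) y) := by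
    intro x y
    constructor
    · rintro ⟨s, h₁, h₂, rfl, rfl⟩
      exact ⟨s, h₁, Finset.mem_inter.mpr ⟨h₂, hσ h₁⟩, rfl, rfl⟩
    · rintro ⟨s, h₁, h₂, hx, hy⟩
      exact ⟨s, h₁, (Finset.mem_inter.mp h₂).1, hx, hy⟩
  refine masterR _ _ (Quot.congr (Equiv.refl _) hiff) (Equiv.refl _) ?_ ?_ ?_
  · rw [hE]
    symm
    rw [Finset.eq_empty_iff_forall_notMem]
    intro x hx
    have h1 := Finset.mem_inter.mp hx
    have h2 : x ∈ G.srt ∪ H.srt := by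
      rcases Finset.mem_union.mp h1.1 with h | h
      · exact Finset.mem_union_left _ h
      · exact Finset.mem_union_right _ (Finset.mem_inter.mp h).1
    have h3 : x ∈ ρ := (Finset.mem_inter.mp h1.2).1
    have : x ∈ (G.srt ∪ H.srt) ∩ ρ := Finset.mem_inter.mpr ⟨h2, h3⟩
    rw [hE] at this
    exact Finset.notMem_empty x this
  · rintro (e | e) <;> rfl
  · intro s h₁ h₂ hρ
    have : s ∈ (G.srt ∪ H.srt) ∩ ρ := Finset.mem_inter.mpr ⟨h₁, hρ⟩
    rw [hE] at this
    exact absurd this (Finset.notMem_empty s)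

/-- A finitely supported involution moving `B` away from `A ∪ B`. -/
theorem freshPerm_spec (B A : Finset ℕ) :
    ∃ γ : Equiv.Perm ℕ, γ.symm = γ ∧ (∀ x, x ∉ B → x ≤ (A ∪ B).sup id → γ x = x) ∧
      (∀ x ∈ B, ∀ y ∈ A ∪ B, γ x ≠ y) ∧ IsFinPerm γ := by
  classical
  set c := (A ∪ B).sup id + 1 with hc
  have hbound : ∀ x, x ∈ A ∪ B → x < c := by
    intro x hx
    have := Finset.le_sup (f := id) hx
    simp only [id_eq] at this
    omega
  set f : ℕ → ℕ := fun x => if x ∈ B then x + c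
    else if c ≤ x ∧ x - c ∈ B then x - c else x with hf
  have hinv : Function.Involutive f := by
    intro x
    by_cases hb : x ∈ B
    · have h1 : f x = x + c := by simp only [hf]; simp [hb]
      have hnb : x + c ∉ B := by
        intro hcon
        have := hbound _ (Finset.mem_union_right _ hcon)
        omega
      rw [h1]
      simp only [hf]
      simp only [hnb, if_false]
      have hcc : c ≤ x + c ∧ x + c - c ∈ B := ⟨by omega, by simpa using hb⟩
      rw [if_pos hcc]
      omega
    · by_cases h2 : c ≤ x ∧ x - c ∈ B
      · have h1 : f x = x - c := by simp only [hf]; simp [hb, h2]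
        have hnb2 : x - c ∈ B := h2.2
        rw [h1]
        simp only [hf]
        rw [if_pos hnb2]
        omega
      · have h1 : f x = x := by simp only [hf]; simp [hb, h2]
        rw [h1, h1]
  refine ⟨hinv.toPerm f, ?_, ?_, ?_, ?_⟩
  · ext x
    rfl
  · intro x hxb hxle
    show f x = x
    rw [hf]
    have : ¬ (c ≤ x ∧ x - c ∈ B) := by
      rintro ⟨h1, _⟩; omega
    simp [hxb, this]
  · intro x hx y hy
    show f x ≠ y
    have h1 : f x = x + c := by rw [hf]; simp [hx]
    have := hbound y hy
    omega
  · refine ⟨B ∪ Finset.image (· + c) B, ?_⟩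
    intro x hx
    show f x = x
    have hxb : x ∉ B := fun h => hx (Finset.mem_union_left _ h)
    have : ¬ (c ≤ x ∧ x - c ∈ B) := by
      rintro ⟨h1, h2⟩
      exact hx (Finset.mem_union_right _ (Finset.mem_image.mpr ⟨x - c, h2, by omega⟩))
    rw [hf]
    simp [hxb, this]

/-- Renaming hidden sources to fresh labels to push a restriction outwards. -/
theorem giso_fresh (Y H : CG Lab ar) (s₀ : Finset ℕ) (γ : Equiv.Perm ℕ)
    (hfix : ∀ y ∈ Y.srt ∩ s₀, γ.symm y = y)
    (hmove : ∀ y ∈ Y.srt, y ∉ s₀ →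
      γ.symm y ∉ s₀ ∧ γ.symm y ∉ H.srt ∧ γ.symm y ∉ Y.srt) :
    GIso' (ccomp (crestrict s₀ Y) H)
      (crestrict (s₀ ∪ H.srt) (ccomp (crename γ Y) H)) := by
  have hsub : (ccomp (crestrict s₀ Y) H).srt ⊆ (Y.srt ∩ s₀) ∪ H.srt := by
    exact Finset.Subset.refl _
  refine (giso_restrict_superset hsub).symm.trans ?_
  have hfixap : ∀ y, y ∈ Y.srt → y ∈ s₀ → γ y = y := by
    intro y h1 h2
    have := hfix y (Finset.mem_inter.mpr ⟨h1, h2⟩)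
    conv_lhs => rw [← this]
    exact γ.apply_symm_apply y
  have hmemimg : ∀ y, y ∈ Y.srt → y ∈ s₀ → y ∈ (crename γ Y).srt := by
    intro y h1 h2
    exact Finset.mem_image.mpr ⟨y, h1, hfix y (Finset.mem_inter.mpr ⟨h1, h2⟩)⟩
  have himgmem : ∀ t, t ∈ (crename γ Y).srt → t ∉ H.srt ∨ (t ∈ Y.srt ∧ t ∈ s₀) := by
    intro t ht
    obtain ⟨u, hu, he⟩ := Finset.mem_image.mp ht
    by_cases hus : u ∈ s₀
    · right
      have : t = u := by rw [← he]; exact hfix u (Finset.mem_inter.mpr ⟨hu, hus⟩)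
      rw [this]; exact ⟨hu, hus⟩
    · left
      rw [← he]
      exact (hmove u hu hus).2.1
  have hiff : ∀ x y, fuseRel (crestrict s₀ Y) H x y ↔
      fuseRel (crename γ Y) H ((Equiv.refl _) x) ((Equiv.refl _) y) := by
    intro x y
    constructor
    · rintro ⟨t, h₁, h₂, rfl, rfl⟩
      have ht1 : t ∈ Y.srt := (Finset.mem_inter.mp h₁).1
      have ht2 : t ∈ s₀ := (Finset.mem_inter.mp h₁).2
      refine ⟨t, hmemimg t ht1 ht2, h₂, ?_, rfl⟩
      show Sum.inl ((crestrict s₀ Y).src ⟨t, h₁⟩) = Sum.inl (Y.src ⟨γ t, _⟩)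
      exact congrArg Sum.inl (congrArg Y.src (Subtype.ext (hfixap t ht1 ht2).symm))
    · rintro ⟨t, h₁, h₂, rfl, rfl⟩
      rcases himgmem t h₁ with h | h
      · exact absurd h₂ h
      · refine ⟨t, Finset.mem_inter.mpr h, h₂, ?_, rfl⟩
        show Sum.inl (Y.src ⟨γ t, _⟩) = Sum.inl (Y.src ⟨t, _⟩)
        exact congrArg Sum.inl (congrArg Y.src (Subtype.ext (hfixap t h.1 h.2)))
  refine masterR _ _ (Quot.congr (Equiv.refl _) hiff) (Equiv.refl _) ?_ ?_ ?_
  · ext x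
    simp only [crestrict_srt, crename_srt, Finset.mem_inter, Finset.mem_union]
    constructor
    · rintro ⟨h1, -⟩
      rcases h1 with ⟨hy, hs⟩ | hh
      · exact ⟨Or.inl (hmemimg x hy hs), Or.inl hs⟩
      · exact ⟨Or.inr hh, Or.inr hh⟩
    · rintro ⟨h1, h2⟩
      have key : (x ∈ Y.srt ∧ x ∈ s₀) ∨ x ∈ H.srt := by
        rcases h1 with h | h
        · rcases himgmem x h with hH | ⟨hy, hs⟩
          · rcases h2 with hs | hh
            · obtain ⟨u, hu, he⟩ := Finset.mem_image.mp h
              by_cases hus : u ∈ s₀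
              · have hx : x = u := by
                  rw [← he]; exact hfix u (Finset.mem_inter.mpr ⟨hu, hus⟩)
                have hxy : x ∈ Y.srt := by rw [hx]; exact hu
                exact Or.inl ⟨hxy, hs⟩
              · exact absurd hs (by
                  have := (hmove u hu hus).1
                  rwa [he] at this)
            · exact Or.inr hh
          · exact Or.inl ⟨hy, hs⟩
        · exact Or.inr h
      exact ⟨key, key⟩
  · rintro (e | e) <;> rfl
  · intro t h₁ h₂ hρ
    unfold srcQ
    by_cases hp : t ∈ (crestrict s₀ Y).srt
    · have ht1 : t ∈ Y.srt := (Finset.mem_inter.mp hp).1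
      have ht2 : t ∈ s₀ := (Finset.mem_inter.mp hp).2
      rw [dif_pos hp, dif_pos (hmemimg t ht1 ht2)]
      show Quot.mk _ (Sum.inl ((crestrict s₀ Y).src ⟨t, hp⟩)) = Quot.mk _ (Sum.inl (Y.src ⟨γ t, _⟩))
      exact congrArg (fun z => Quot.mk (fuseRel (crename γ Y) H) (Sum.inl z))
        (congrArg Y.src (Subtype.ext (hfixap t ht1 ht2).symm))
    · have hH : t ∈ H.srt := (Finset.mem_union.mp h₁).resolve_left hp
      have hp' : ¬ t ∈ (crename γ Y).srt := by
        intro hc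
        rcases himgmem t hc with h | h
        · exact h hH
        · exact hp (Finset.mem_inter.mpr h)
      rw [dif_neg hp, dif_neg hp']
      rfl

/-- Composing with the empty sourceless graph is the identity up to iso. -/
theorem giso_comp_czero (X : CG Lab ar) :
    GIso' (ccomp X (czero (∅ : Finset ℕ))) X := by
  have hno : ∀ x y : Fin X.n ⊕ Fin (czero (∅ : Finset ℕ) : CG Lab ar).n,
      fuseRel X (czero ∅) x y → False := by
    rintro _ _ ⟨s, h₁, h₂, _, _⟩
    exact absurd h₂ (Finset.notMem_empty s)
  have hzn : (czero (∅ : Finset ℕ) : CG Lab ar).n = 0 := Finset.card_empty (α := ℕ)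
  let q0 : Quot (fuseRel X (czero (∅ : Finset ℕ))) ≃ Fin X.n :=
    { toFun := Quot.lift (Sum.elim id (fun z => (Fin.cast hzn z).elim0))
        (fun x y h => absurd h (hno x y))
      invFun := fun v => Quot.mk _ (Sum.inl v)
      left_inv := by
        intro p
        induction p using Quot.ind with
        | _ x =>
          rcases x with v | z
          · rfl
          · exact (Fin.cast hzn z).elim0
      right_inv := fun v => rfl }
  have hj : ∀ e : Fin (ccomp X (czero (∅ : Finset ℕ))).m,
      (finSumFinEquiv.symm e : Fin X.m ⊕ Fin (czero (∅ : Finset ℕ) : CG Lab ar).m)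
        = Sum.inl e := by
    intro e
    erw [Equiv.symm_apply_eq, finSumFinEquiv_apply_left]
    exact Fin.ext rfl
  refine ⟨Finset.union_empty _, (eQ X (czero ∅)).symm.trans q0,
    (Equiv.refl (Fin X.m) : Fin (ccomp X (czero (∅ : Finset ℕ))).m ≃ Fin X.m),
    fun e => ?_, fun s h₁ h₂ => ?_⟩
  · show X.edg e = _
    rw [ccomp_edg, hj e]
    simp only [edgeQ]
    show X.edg e = ⟨(X.edg e).1, fun i => q0 ((eQ X (czero ∅)).symm (eQ X (czero ∅)
      (Quot.mk _ (Sum.inl ((X.edg e).2 i)))))⟩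
    simp only [Equiv.symm_apply_apply]
    rfl
  · rw [ccomp_src]
    show q0 ((eQ X (czero ∅)).symm (eQ X (czero ∅) (srcQ X (czero ∅) s h₁))) = _
    rw [Equiv.symm_apply_apply]
    unfold srcQ
    rw [dif_pos h₂]
    rfl

end Aux6
section Aux7

variable {Lab : Type} {ar : Lab → ℕ}

theorem exists_freshPerm (Ysrt s₀ Hsrt : Finset ℕ) :
    ∃ γ : Equiv.Perm ℕ,
      (∀ y ∈ Ysrt ∩ s₀, γ.symm y = y) ∧
      (∀ y ∈ Ysrt, y ∉ s₀ → γ.symm y ∉ s₀ ∧ γ.symm y ∉ Hsrt ∧ γ.symm y ∉ Ysrt) := by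
  obtain ⟨γ, hsymm, hfix, hmove, -⟩ :=
    freshPerm_spec (Ysrt \ s₀) (s₀ ∪ Hsrt ∪ Ysrt)
  refine ⟨γ, ?_, ?_⟩
  · intro y hy
    rw [hsymm]
    have hy1 := Finset.mem_inter.mp hy
    refine hfix y (by simp [Finset.mem_sdiff, hy1.2]) ?_
    have : y ∈ (s₀ ∪ Hsrt ∪ Ysrt) ∪ (Ysrt \ s₀) :=
      Finset.mem_union_left _ (Finset.mem_union_right _ hy1.1)
    have := Finset.le_sup (f := id) this
    simpa using this
  · intro y hy hns
    have hyB : y ∈ Ysrt \ s₀ := Finset.mem_sdiff.mpr ⟨hy, hns⟩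
    rw [hsymm]
    have h3 := hmove y hyB
    refine ⟨fun hc => h3 _ (Finset.mem_union_left _
        (Finset.mem_union_left _ (Finset.mem_union_left _ hc))) rfl,
      fun hc => h3 _ (Finset.mem_union_left _
        (Finset.mem_union_left _ (Finset.mem_union_right _ hc))) rfl,
      fun hc => h3 _ (Finset.mem_union_left _ (Finset.mem_union_right _ hc)) rfl⟩

theorem keyHole {τ : Finset ℕ} {L : Set (CG Lab ar)} (hsf : ∀ G ∈ L, G.srt = ∅)
    (hiso : IsoClosed L) {G₁ G₂ : CG Lab ar} (h₁ : G₁.srt ⊆ τ) (h₂ : G₂.srt ⊆ τ)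
    (hC : SynCongHRT τ L G₁ G₂) (ρ : Finset ℕ) (β : Equiv.Perm ℕ) (H : CG Lab ar) :
    (crestrict ρ (ccomp (crename β G₁) H) ∈ L
      ↔ crestrict ρ (ccomp (crename β G₂) H) ∈ L) := by
  by_cases hS : ((G₁.srt.image (β.symm : ℕ → ℕ)) ∪ H.srt) ∩ ρ = ∅
  · -- the sort of the whole expression is empty: reduce to a τ-context
    set H' := crename β.symm H with hH'
    set K := crestrict τ H' with hK
    set c' : HRCtx Lab ar := HRCtx.restrict ((ρ.image (β : ℕ → ℕ)) ∩ τ)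
      (HRCtx.comp HRCtx.hole (HRCtx.const K)) with hc'
    have hc'uses : c'.usesOnly τ := by
      refine ⟨Finset.inter_subset_right, trivial, ?_⟩
      show (crestrict τ H').srt ⊆ τ
      exact Finset.inter_subset_right
    have chain : ∀ G : CG Lab ar, G.srt ⊆ τ → G.srt = G₁.srt →
        GIso' (crestrict ρ (ccomp (crename β G) H)) (c'.apply G) := by
      intro G hGτ hGs
      have hEsrt : (crestrict ρ (ccomp (crename β G) H)).srt = ∅ := by
        show ((G.srt.image (β.symm : ℕ → ℕ)) ∪ H.srt) ∩ ρ = ∅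
        rw [hGs]; exact hS
      refine GIso'.trans (giso_rename_of_srt_empty β.symm hEsrt).symm ?_
      have i1 : GIso' (crename β.symm (crestrict ρ (ccomp (crename β G) H)))
          (crestrict (ρ.image (β : ℕ → ℕ)) (crename β.symm (ccomp (crename β G) H))) := by
        have h := giso_rename_restrict β.symm ρ (ccomp (crename β G) H)
        rwa [Equiv.symm_symm] at h
      refine i1.trans ?_
      have i2 : GIso' (crename β.symm (ccomp (crename β G) H)) (ccomp G H') := by
        refine (giso_rename_comp β.symm _ _).trans ?_
        refine GIso'.comp ?_ (GIso'.refl H')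
        refine (giso_rename_rename β.symm β G).trans ?_
        rw [Equiv.symm_trans_self]
        exact giso_rename_refl G
      refine (GIso'.restrict _ i2).trans ?_
      have hE2 : (G.srt ∪ H'.srt) ∩ ρ.image (β : ℕ → ℕ) = ∅ := by
        have hH'srt : H'.srt = H.srt.image (β : ℕ → ℕ) := by
          show H.srt.image ((β.symm.symm : Equiv.Perm ℕ) : ℕ → ℕ) = _
          rw [Equiv.symm_symm]
        rw [hH'srt, hGs, Finset.eq_empty_iff_forall_notMem]
        intro x hx
        obtain ⟨hx1, hx2⟩ := Finset.mem_inter.mp hx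
        obtain ⟨y, hy, he⟩ := Finset.mem_image.mp hx2
        have hmem : β.symm x ∈ ((G₁.srt.image (β.symm : ℕ → ℕ)) ∪ H.srt) ∩ ρ := by
          refine Finset.mem_inter.mpr ⟨?_, by rw [← he]; simpa using hy⟩
          rcases Finset.mem_union.mp hx1 with h | h
          · exact Finset.mem_union_left _ (Finset.mem_image_of_mem _ h)
          · obtain ⟨z, hz, hez⟩ := Finset.mem_image.mp h
            refine Finset.mem_union_right _ ?_
            rw [← hez]
            simpa using hz
        rw [hS] at hmem
        exact Finset.notMem_empty _ hmem
      exact giso_trim τ (ρ.image (β : ℕ → ℕ)) hGτ hE2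
    calc crestrict ρ (ccomp (crename β G₁) H) ∈ L
        ↔ c'.apply G₁ ∈ L := mem_iff_of_giso' hiso (chain G₁ h₁ rfl)
      _ ↔ c'.apply G₂ ∈ L := hC.2 c' hc'uses
      _ ↔ crestrict ρ (ccomp (crename β G₂) H) ∈ L :=
          (mem_iff_of_giso' hiso (chain G₂ h₂ hC.1.symm)).symm
  · -- nonempty sort: both sides are outside L
    have hS' : ((G₂.srt.image (β.symm : ℕ → ℕ)) ∪ H.srt) ∩ ρ ≠ ∅ := by
      rw [← hC.1]; exact hS
    constructor
    · intro hmem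
      exact absurd (hsf _ hmem) hS
    · intro hmem
      exact absurd (hsf _ hmem) hS'

theorem keyP {τ : Finset ℕ} {L : Set (CG Lab ar)} (hsf : ∀ G ∈ L, G.srt = ∅)
    (hiso : IsoClosed L) {G₁ G₂ : CG Lab ar} (h₁ : G₁.srt ⊆ τ) (h₂ : G₂.srt ⊆ τ)
    (hC : SynCongHRT τ L G₁ G₂) (c : HRCtx Lab ar) :
    ∀ (ρ : Finset ℕ) (β : Equiv.Perm ℕ) (H : CG Lab ar),
      (crestrict ρ (ccomp (crename β (c.apply G₁)) H) ∈ L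
        ↔ crestrict ρ (ccomp (crename β (c.apply G₂)) H) ∈ L) := by
  induction c with
  | hole => exact fun ρ β H => keyHole hsf hiso h₁ h₂ hC ρ β H
  | const H₀ => exact fun ρ β H => Iff.rfl
  | zero τ' => exact fun ρ β H => Iff.rfl
  | edge a s => exact fun ρ β H => Iff.rfl
  | restrict τ' c ih =>
    intro ρ β H
    obtain ⟨γ, hfix, hmove⟩ := exists_freshPerm
      ((c.apply G₁).srt.image (β.symm : ℕ → ℕ)) (τ'.image (β.symm : ℕ → ℕ)) H.srt
    have hsrt2 : (c.apply G₂).srt = (c.apply G₁).srt := apply_srt_congr hC.1.symm c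
    have chain : ∀ G : CG Lab ar, (c.apply G).srt = (c.apply G₁).srt →
        GIso' (crestrict ρ (ccomp (crename β (HRCtx.apply (HRCtx.restrict τ' c) G)) H))
          (crestrict ((τ'.image (β.symm : ℕ → ℕ) ∪ H.srt) ∩ ρ)
            (ccomp (crename (γ.trans β) (c.apply G)) H)) := by
      intro G hGs
      have heq : (crename β (c.apply G)).srt
          = (c.apply G₁).srt.image (β.symm : ℕ → ℕ) := by
        show (c.apply G).srt.image _ = _
        rw [hGs]
      have hfixG : ∀ y ∈ (crename β (c.apply G)).srt ∩ τ'.image (β.symm : ℕ → ℕ),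
          γ.symm y = y := by
        intro y hy
        rw [heq] at hy
        exact hfix y hy
      have hmoveG : ∀ y ∈ (crename β (c.apply G)).srt, y ∉ τ'.image (β.symm : ℕ → ℕ) →
          γ.symm y ∉ τ'.image (β.symm : ℕ → ℕ) ∧ γ.symm y ∉ H.srt ∧
          γ.symm y ∉ (crename β (c.apply G)).srt := by
        intro y hy hns
        rw [heq] at hy
        rw [heq]
        exact hmove y hy hns
      show GIso' (crestrict ρ (ccomp (crename β (crestrict τ' (c.apply G))) H)) _
      refine (GIso'.restrict ρ (GIso'.comp
        (giso_rename_restrict β τ' (c.apply G)) (GIso'.refl H))).trans ?_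
      refine (GIso'.restrict ρ (giso_fresh (crename β (c.apply G)) H
        (τ'.image (β.symm : ℕ → ℕ)) γ hfixG hmoveG)).trans ?_
      refine (giso_restrict_restrict ρ _ _).trans ?_
      exact GIso'.restrict _ (GIso'.comp
        (giso_rename_rename γ β (c.apply G)) (GIso'.refl H))
    calc crestrict ρ (ccomp (crename β (HRCtx.apply (HRCtx.restrict τ' c) G₁)) H) ∈ L
        ↔ crestrict ((τ'.image (β.symm : ℕ → ℕ) ∪ H.srt) ∩ ρ)
            (ccomp (crename (γ.trans β) (c.apply G₁)) H) ∈ L :=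
          mem_iff_of_giso' hiso (chain G₁ rfl)
      _ ↔ crestrict ((τ'.image (β.symm : ℕ → ℕ) ∪ H.srt) ∩ ρ)
            (ccomp (crename (γ.trans β) (c.apply G₂)) H) ∈ L :=
          ih ((τ'.image (β.symm : ℕ → ℕ) ∪ H.srt) ∩ ρ) (γ.trans β) H
      _ ↔ _ := (mem_iff_of_giso' hiso (chain G₂ hsrt2)).symm
  | rename α hα c ih =>
    intro ρ β H
    have chain : ∀ G : CG Lab ar,
        GIso' (crestrict ρ (ccomp (crename β (HRCtx.apply (HRCtx.rename α hα c) G)) H))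
          (crestrict ρ (ccomp (crename (β.trans α) (c.apply G)) H)) := by
      intro G
      exact GIso'.restrict ρ (GIso'.comp (giso_rename_rename β α (c.apply G)) (GIso'.refl H))
    calc crestrict ρ (ccomp (crename β (HRCtx.apply (HRCtx.rename α hα c) G₁)) H) ∈ L
        ↔ crestrict ρ (ccomp (crename (β.trans α) (c.apply G₁)) H) ∈ L :=
          mem_iff_of_giso' hiso (chain G₁)
      _ ↔ crestrict ρ (ccomp (crename (β.trans α) (c.apply G₂)) H) ∈ L :=
          ih ρ (β.trans α) H
      _ ↔ _ := (mem_iff_of_giso' hiso (chain G₂)).symm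
  | comp c₁ c₂ ih₁ ih₂ =>
    intro ρ β H
    have swap3 : ∀ A B : CG Lab ar, GIso' (ccomp A (ccomp B H)) (ccomp B (ccomp A H)) :=
      fun A B => (giso_comp_assoc A B H).symm.trans
        ((GIso'.comp (giso_comp_comm A B) (GIso'.refl H)).trans (giso_comp_assoc B A H))
    have chain : ∀ G : CG Lab ar,
        GIso' (crestrict ρ (ccomp (crename β (HRCtx.apply (HRCtx.comp c₁ c₂) G)) H))
          (crestrict ρ (ccomp (crename β (c₁.apply G)) (ccomp (crename β (c₂.apply G)) H))) := by
      intro G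
      refine GIso'.restrict ρ ?_
      refine (GIso'.comp (giso_rename_comp β (c₁.apply G) (c₂.apply G)) (GIso'.refl H)).trans ?_
      exact giso_comp_assoc _ _ H
    calc crestrict ρ (ccomp (crename β (HRCtx.apply (HRCtx.comp c₁ c₂) G₁)) H) ∈ L
        ↔ crestrict ρ (ccomp (crename β (c₁.apply G₁))
            (ccomp (crename β (c₂.apply G₁)) H)) ∈ L := mem_iff_of_giso' hiso (chain G₁)
      _ ↔ crestrict ρ (ccomp (crename β (c₁.apply G₂))
            (ccomp (crename β (c₂.apply G₁)) H)) ∈ L :=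
          ih₁ ρ β (ccomp (crename β (c₂.apply G₁)) H)
      _ ↔ crestrict ρ (ccomp (crename β (c₂.apply G₁))
            (ccomp (crename β (c₁.apply G₂)) H)) ∈ L :=
          mem_iff_of_giso' hiso (GIso'.restrict ρ (swap3 _ _))
      _ ↔ crestrict ρ (ccomp (crename β (c₂.apply G₂))
            (ccomp (crename β (c₁.apply G₂)) H)) ∈ L :=
          ih₂ ρ β (ccomp (crename β (c₁.apply G₂)) H)
      _ ↔ crestrict ρ (ccomp (crename β (c₁.apply G₂))
            (ccomp (crename β (c₂.apply G₂)) H)) ∈ L :=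
          mem_iff_of_giso' hiso (GIso'.restrict ρ (swap3 _ _))
      _ ↔ _ := (mem_iff_of_giso' hiso (chain G₂)).symm

end Aux7
/-- Let `L` be a set of graphs with no sources and `τ` a finite
sort.  For graphs `G₁`, `G₂` of sorts contained in `τ`, `G₁` and `G₂` are
syntactically congruent for `L` in the full HR graph algebra iff they are
syntactically congruent for `L` in the finitely-sorted subalgebra `G^τ`. -/
theorem syntactic_congruences_agree {Lab : Type} {ar : Lab → ℕ}
    (τ : Finset ℕ) (L : Set (CG Lab ar)) (hsf : ∀ G ∈ L, G.srt = ∅)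
    (hiso : IsoClosed L) (G₁ G₂ : CG Lab ar)
    (h₁ : G₁.srt ⊆ τ) (h₂ : G₂.srt ⊆ τ) :
    SynCongHR L G₁ G₂ ↔ SynCongHRT τ L G₁ G₂ := by
  constructor
  · rintro ⟨hs, h⟩
    exact ⟨hs, fun c _ => h c⟩
  · rintro ⟨hs, h⟩
    refine ⟨hs, fun c => ?_⟩
    have key := keyP hsf hiso h₁ h₂ ⟨hs, h⟩ c ((c.apply G₁).srt) (Equiv.refl ℕ) (czero ∅)
    have unwrap : ∀ X : CG Lab ar, X.srt = (c.apply G₁).srt →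
        GIso' (crestrict ((c.apply G₁).srt)
          (ccomp (crename (Equiv.refl ℕ) X) (czero ∅))) X := by
      intro X hX
      refine GIso'.trans (GIso'.restrict _
        (GIso'.comp (giso_rename_refl X) (GIso'.refl _))) ?_
      refine GIso'.trans (GIso'.restrict _ (giso_comp_czero X)) ?_
      exact giso_restrict_superset (by rw [hX])
    calc HRCtx.apply c G₁ ∈ L
        ↔ crestrict ((c.apply G₁).srt)
            (ccomp (crename (Equiv.refl ℕ) (c.apply G₁)) (czero ∅)) ∈ L :=
          (mem_iff_of_giso' hiso (unwrap (c.apply G₁) rfl)).symm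
      _ ↔ crestrict ((c.apply G₁).srt)
            (ccomp (crename (Equiv.refl ℕ) (c.apply G₂)) (czero ∅)) ∈ L := key
      _ ↔ HRCtx.apply c G₂ ∈ L :=
          mem_iff_of_giso' hiso (unwrap (c.apply G₂) (apply_srt_congr hs c).symm)

end

end GraphCF
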